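/- Let H be a complex Hilbert space and let A, B be bounded linear operators on H such that B T A = A T B for every bounded linear operator T on H. Then A and B are linearly dependent: there exists λ ∈ ℂ with B = λA or A = λB. -/

import Mathlib

/-- Let `H` be a complex Hilbert space and `A, B` bounded linear operators
on `H` such that `B T A = A T B` for every bounded linear operator `T` on `H`.  Then `A` and
`B` are linearly dependent: `B = λ • A` or `A = λ • B` for some `λ ∈ ℂ`. -/
theorem stmt6 {H : Type*} [NormedAddCommGroup H] [InnerProductSpace ℂ H] [CompleteSpace H]
    (A B : H →L[ℂ] H) (h : ∀ T : H →L[ℂ] H, B * T * A = A * T * B) :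
    (∃ l : ℂ, B = l • A) ∨ (∃ l : ℂ, A = l • B) := by
  have key : ∀ (u v z : H),
      (inner ℂ v (A z) : ℂ) • B u = (inner ℂ v (B z) : ℂ) • A u := by
    intro u v z
    have := congrFun (congrArg (fun (T : H →L[ℂ] H) => (T : H → H))
      (h ((innerSL ℂ v).smulRight u))) z
    simpa [ContinuousLinearMap.mul_apply, map_smul, innerSL_apply_apply] using this
  by_cases hA : A = 0
  · exact Or.inr ⟨0, by simp [hA]⟩
  · left
    obtain ⟨z, hz⟩ : ∃ z, A z ≠ 0 := by
      by_contra hcon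
      push_neg at hcon
      exact hA (ContinuousLinearMap.ext fun x => by simpa using hcon x)
    have hc : (inner ℂ (A z) (A z) : ℂ) ≠ 0 := by
      simpa [inner_self_eq_zero] using hz
    refine ⟨(inner ℂ (A z) (A z) : ℂ)⁻¹ * inner ℂ (A z) (B z), ?_⟩
    ext u
    have := key u (A z) z
    have h2 : B u = (inner ℂ (A z) (A z) : ℂ)⁻¹ • ((inner ℂ (A z) (B z) : ℂ) • A u) := by
      rw [← this, smul_smul, inv_mul_cancel₀ hc, one_smul]
    simp [h2, smul_smul]
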